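/- arXiv:1812.10737 — 2 statements merged into one kernel-verified Lean document; each statement's English description precedes it below -/
import Mathlib

section
/- If G is a simple graph on n vertices that does not contain a path of length k (k edges), then the number of edges of G is at most (k-1)n/2. -/
open SimpleGraph Finset

namespace EGP

section A
variable {V : Type} {G : SimpleGraph V}


variable {V : Type} {G : SimpleGraph V}

/-- Ascending segment of a walk between vertex indices. -/
def ascend {a b : V} (P : G.Walk a b) : (s d : ℕ) → (h : s + d ≤ P.length) →
    G.Walk (P.getVert s) (P.getVert (s + d))
  | s, 0, _ => SimpleGraph.Walk.nil
  | s, d+1, h =>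
    SimpleGraph.Walk.cons (P.adj_getVert_succ (by omega))
      ((ascend P (s+1) d (by omega)).copy rfl (by congr 1; omega))

@[simp] lemma ascend_length {a b : V} (P : G.Walk a b) (s d : ℕ) (h : s + d ≤ P.length) :
    (ascend P s d h).length = d := by
  induction d generalizing s with
  | zero => rfl
  | succ d ih => simp [ascend, ih]

lemma ascend_support {a b : V} (P : G.Walk a b) (s d : ℕ) (h : s + d ≤ P.length) :
    (ascend P s d h).support = (List.range' s (d+1)).map P.getVert := by
  induction d generalizing s with
  | zero => simp [ascend]
  | succ d ih =>
      rw [List.range'_succ]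
      simp only [ascend, SimpleGraph.Walk.support_cons, SimpleGraph.Walk.support_copy, ih]
      rfl

lemma getVert_mem_support {a b : V} (P : G.Walk a b) {i : ℕ} (hi : i ≤ P.length) :
    P.getVert i ∈ P.support :=
  SimpleGraph.Walk.mem_support_iff_exists_getVert.mpr ⟨i, rfl, hi⟩

lemma getVert_injOn {a b : V} {P : G.Walk a b} (hP : P.IsPath) :
    ∀ {i j : ℕ}, i ≤ P.length → j ≤ P.length → P.getVert i = P.getVert j → i = j := by
  induction P with
  | nil => intro i j hi hj _; simp only [SimpleGraph.Walk.length_nil, Nat.le_zero] at hi hj; omega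
  | cons h q ih =>
      intro i j hi hj hij
      rw [SimpleGraph.Walk.cons_isPath_iff] at hP
      match i, j with
      | 0, 0 => rfl
      | 0, j+1 =>
          exfalso
          rw [SimpleGraph.Walk.getVert_zero] at hij
          have : q.getVert j ∈ q.support := getVert_mem_support q (by simpa using hj)
          rw [SimpleGraph.Walk.getVert_cons_succ] at hij
          rw [← hij] at this
          exact hP.2 this
      | i+1, 0 =>
          exfalso
          rw [SimpleGraph.Walk.getVert_zero] at hij
          have : q.getVert i ∈ q.support := getVert_mem_support q (by simpa using hi)
          rw [SimpleGraph.Walk.getVert_cons_succ] at hij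
          rw [hij] at this
          exact hP.2 this
      | i+1, j+1 =>
          simp only [SimpleGraph.Walk.getVert_cons_succ] at hij
          have := ih hP.1 (by simpa using hi) (by simpa using hj) hij
          omega


end A

section B
variable {V : Type} {G : SimpleGraph V}




/-- From a path of length ≥ k, extract a path of length exactly k. -/
lemma exists_path_of_le {k : ℕ} : ∀ {u v : V} (p : G.Walk u v), p.IsPath → k ≤ p.length →
    ∃ (u' v' : V) (q : G.Walk u' v'), q.IsPath ∧ q.length = k := by
  intro u v p
  induction p with
  | nil =>
      rename_i w
      intro hp hk
      exact ⟨w, w, SimpleGraph.Walk.nil, SimpleGraph.Walk.IsPath.nil, by simp at hk ⊢; omega⟩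
  | cons h q ih =>
      intro hp hk
      rcases eq_or_lt_of_le hk with he | hlt
      · exact ⟨_, _, _, hp, he.symm⟩
      · exact ih hp.of_cons (by simpa using Nat.lt_succ_iff.mp (by simpa using hlt))

section Fin
variable [Fintype V] [DecidableEq V] [DecidableRel G.Adj]

lemma easy_bound : 2 * G.edgeFinset.card ≤ Fintype.card V * (Fintype.card V - 1) := by
  rw [← SimpleGraph.sum_degrees_eq_twice_card_edges]
  calc ∑ v, G.degree v ≤ ∑ _v : V, (Fintype.card V - 1) := by
        apply Finset.sum_le_sum
        intro v _
        have := G.degree_lt_card_verts v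
        omega
    _ = Fintype.card V * (Fintype.card V - 1) := by
        rw [Finset.sum_const, Finset.card_univ, smul_eq_mul]

variable (s : Set V) [DecidablePred (· ∈ s)]

instance : DecidableRel (G.induce s).Adj := fun a b => by
  simp only [SimpleGraph.comap_adj, Function.Embedding.coe_subtype]
  infer_instance

lemma degree_induce (u : s) :
    (G.induce s).degree u = ((G.neighborFinset ↑u).filter (· ∈ s)).card := by
  rw [← card_neighborFinset_eq_degree]
  refine Finset.card_nbij Subtype.val ?_ ?_ ?_
  · intro w hw
    simp only [Finset.mem_coe, mem_neighborFinset] at hw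
    simp only [Finset.mem_coe, Finset.mem_filter, mem_neighborFinset]
    exact ⟨hw, w.2⟩
  · intro w₁ _ w₂ _ h; exact Subtype.ext h
  · intro w hw
    simp only [Finset.coe_filter, Set.mem_setOf_eq, mem_neighborFinset] at hw
    exact ⟨⟨w, hw.2⟩, by simp [mem_neighborFinset, hw.1], rfl⟩

/-- Paths in an induced subgraph give paths in the ambient graph. -/
lemma no_path_induce {k : ℕ}
    (hpath : ∀ (u v : V) (p : G.Walk u v), p.IsPath → p.length ≠ k) :
    ∀ (u v : s) (p : (G.induce s).Walk u v), p.IsPath → p.length ≠ k := by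
  intro u v p hp hlen
  have hinj : Function.Injective (SimpleGraph.Embedding.induce s (G := G)).toHom :=
    (SimpleGraph.Embedding.induce (G := G) s).injective
  exact hpath _ _ (p.map (SimpleGraph.Embedding.induce (G := G) s).toHom)
    (SimpleGraph.Walk.map_isPath_of_injective hinj hp)
    (by rwa [SimpleGraph.Walk.length_map])

end Fin


end B

section C
variable {V : Type} {G : SimpleGraph V}
variable [Fintype V] [DecidableEq V] [DecidableRel G.Adj]




lemma twice_card_induce (s : Set V) [DecidablePred (· ∈ s)] :
    2 * (G.induce s).edgeFinset.card
      = ∑ u ∈ Finset.univ.filter (· ∈ s), ((G.neighborFinset u).filter (· ∈ s)).card := by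
  calc 2 * (G.induce s).edgeFinset.card
      = ∑ u : {x : V // x ∈ s}, ((G.neighborFinset ↑u).filter (· ∈ s)).card := by
        rw [← SimpleGraph.sum_degrees_eq_twice_card_edges]
        exact Finset.sum_congr rfl (fun u _ => degree_induce s u)
    _ = ∑ u ∈ Finset.univ.filter (· ∈ s), ((G.neighborFinset u).filter (· ∈ s)).card :=
        (Finset.sum_subtype (p := (· ∈ s)) (Finset.univ.filter (· ∈ s))
          (fun x => by simp) (fun u => ((G.neighborFinset u).filter (· ∈ s)).card)).symm

lemma edge_count_split (s t : Set V) [DecidablePred (· ∈ s)] [DecidablePred (· ∈ t)]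
    (hst : ∀ x, x ∈ t ↔ x ∉ s) (h : ∀ u w, u ∈ s → w ∉ s → ¬ G.Adj u w) :
    2 * G.edgeFinset.card
      = 2 * (G.induce s).edgeFinset.card + 2 * (G.induce t).edgeFinset.card := by
  rw [twice_card_induce, twice_card_induce, ← SimpleGraph.sum_degrees_eq_twice_card_edges]
  have hs : ∀ u ∈ Finset.univ.filter (· ∈ s),
      ((G.neighborFinset u).filter (· ∈ s)).card = G.degree u := by
    intro u hu
    simp only [Finset.mem_filter] at hu
    rw [Finset.filter_true_of_mem, card_neighborFinset_eq_degree]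
    intro w hw
    by_contra hws
    exact h u w hu.2 hws (by simpa [mem_neighborFinset] using hw)
  have ht : ∀ u ∈ Finset.univ.filter (· ∈ t),
      ((G.neighborFinset u).filter (· ∈ t)).card = G.degree u := by
    intro u hu
    simp only [Finset.mem_filter, hst] at hu
    rw [Finset.filter_true_of_mem, card_neighborFinset_eq_degree]
    intro w hw
    rw [hst]
    intro hws
    exact h w u hws hu.2 ((G.adj_comm u w).mp (by simpa [mem_neighborFinset] using hw))
  rw [Finset.sum_congr rfl hs, Finset.sum_congr rfl ht]
  have : Finset.univ.filter (· ∈ t) = Finset.univ.filter (fun x => ¬ x ∈ s) := by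
    apply Finset.filter_congr; intro x _; simpa using hst x
  rw [this, Finset.sum_filter_add_sum_filter_not]

lemma edge_count_delete (v : V) :
    2 * G.edgeFinset.card
      = 2 * (G.induce {w | w ≠ v}).edgeFinset.card + 2 * G.degree v := by
  rw [twice_card_induce, ← SimpleGraph.sum_degrees_eq_twice_card_edges]
  have h1 : Finset.univ.filter (· ∈ ({w : V | w ≠ v} : Set V)) = Finset.univ.erase v := by
    ext w; simp [Finset.mem_erase]
  have h2 : ∀ u : V, (G.neighborFinset u).filter (· ∈ ({w : V | w ≠ v} : Set V))
      = (G.neighborFinset u).erase v := by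
    intro u; ext w; simp [Finset.mem_erase, and_comm]
  rw [h1]
  simp only [h2]
  have key : ∀ u ∈ Finset.univ.erase v,
      ((G.neighborFinset u).erase v).card + (if G.Adj u v then 1 else 0) = G.degree u := by
    intro u _
    rw [← card_neighborFinset_eq_degree]
    by_cases hadj : G.Adj u v
    · rw [if_pos hadj]
      exact Finset.card_erase_add_one (by simpa [mem_neighborFinset] using hadj)
    · rw [if_neg hadj, Finset.erase_eq_of_notMem (by simpa [mem_neighborFinset] using hadj),
        add_zero]
  have hsum : ∑ u ∈ Finset.univ.erase v, ((G.neighborFinset u).erase v).card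
      + ∑ u ∈ Finset.univ.erase v, (if G.Adj u v then 1 else 0)
      = ∑ u ∈ Finset.univ.erase v, G.degree u := by
    rw [← Finset.sum_add_distrib]
    exact Finset.sum_congr rfl key
  have hdeg : ∑ u ∈ Finset.univ.erase v, (if G.Adj u v then 1 else 0) = G.degree v := by
    rw [← Finset.card_filter]
    have : (Finset.univ.erase v).filter (fun u => G.Adj u v) = G.neighborFinset v := by
      ext u
      simp only [Finset.mem_filter, Finset.mem_erase, Finset.mem_univ, true_and, and_true,
        mem_neighborFinset]
      constructor
      · rintro ⟨_, h⟩; exact h.symm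
      · intro h; exact ⟨G.ne_of_adj h.symm, h.symm⟩
    rw [this, card_neighborFinset_eq_degree]
  have htot : ∑ u ∈ Finset.univ.erase v, G.degree u + G.degree v = ∑ u, G.degree u :=
    Finset.sum_erase_add _ _ (Finset.mem_univ v)
  omega

lemma card_subtype_ne (v : V) :
    Fintype.card {w : V // w ∈ {w : V | w ≠ v}} = Fintype.card V - 1 := by
  rw [Fintype.card_subtype]
  have : Finset.univ.filter (fun w : V => w ∈ {w : V | w ≠ v}) = Finset.univ.erase v := by
    ext w; simp [Finset.mem_erase]
  rw [this, Finset.card_erase_of_mem (Finset.mem_univ v), Finset.card_univ]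

lemma card_subtype_split (s t : Set V) [DecidablePred (· ∈ s)] [DecidablePred (· ∈ t)]
    (hst : ∀ x, x ∈ t ↔ x ∉ s) :
    Fintype.card s + Fintype.card t = Fintype.card V := by
  rw [Fintype.card_subtype, Fintype.card_subtype]
  have : Finset.univ.filter (· ∈ t) = Finset.univ.filter (fun x => ¬ x ∈ s) := by
    apply Finset.filter_congr; intro x _; simpa using hst x
  rw [this, Finset.card_filter_add_card_filter_not, Finset.card_univ]


end C

section D
variable {V : Type} {G : SimpleGraph V}

lemma rotation {a b : V} (P : G.Walk a b) (hP : P.IsPath)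
    (i j : ℕ) (hi : i < P.length) (hj : j ≤ i)
    (hai : G.Adj a (P.getVert (i+1))) (hbi : G.Adj b (P.getVert i))
    (x : V) (hx : x ∉ P.support) (hxj : G.Adj x (P.getVert j)) :
    ∃ (u v : V) (q : G.Walk u v), q.IsPath ∧ q.length = P.length + 1 := by
  set ℓ := P.length with hℓ
  set f := P.getVert with hf
  have hmemf : ∀ m, m ≤ ℓ → f m ∈ P.support := fun m hm => getVert_mem_support P hm
  have hfb : f ℓ = b := P.getVert_length
  have hinj : ∀ {m m' : ℕ}, m ≤ ℓ → m' ≤ ℓ → f m = f m' → m = m' := fun hm hm' h =>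
    getVert_injOn hP hm hm' h
  rcases lt_or_eq_of_le hj with hjlt | hjeq
  · -- j < i
    refine ⟨x, f (j+1), SimpleGraph.Walk.cons hxj
      ((((ascend P 0 j (by omega)).copy P.getVert_zero (by congr 1; omega)).reverse).append
        (SimpleGraph.Walk.cons hai
          (((ascend P (i+1) (ℓ-i-1) (by omega)).copy rfl
              (by rw [show (i+1)+(ℓ-i-1) = ℓ from by omega]; exact hfb)).append
            (SimpleGraph.Walk.cons hbi
              (((ascend P (j+1) (i-j-1) (by omega)).copy rfl
                  (by congr 1; omega)).reverse))))), ?_, ?_⟩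
    · rw [SimpleGraph.Walk.isPath_def]
      simp only [SimpleGraph.Walk.support_cons, SimpleGraph.Walk.support_append,
        SimpleGraph.Walk.support_reverse, SimpleGraph.Walk.support_copy, ascend_support,
        List.tail_cons, ← List.map_reverse]
      rw [← List.map_append, ← List.map_append, List.nodup_cons]
      set J := (List.range' 0 (j+1)).reverse ++
        ((List.range' (i+1) (ℓ-i-1+1)) ++ (List.range' (j+1) (i-j-1+1)).reverse) with hJdef
      have hbnd : ∀ m ∈ J, m ≤ ℓ := by
        intro m hm
        simp only [hJdef, List.mem_append, List.mem_reverse, List.mem_range'_1] at hm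
        omega
      constructor
      · intro hmem
        obtain ⟨m, hm, hfm⟩ := List.mem_map.mp hmem
        exact hx (hfm ▸ hmemf m (hbnd m hm))
      · have hJnd : J.Nodup := by
          simp only [hJdef, List.nodup_append, List.nodup_reverse, List.disjoint_left,
            List.mem_append, List.mem_reverse, List.mem_range'_1]
          refine ⟨List.nodup_range', ⟨List.nodup_range', List.nodup_range', ?_⟩, ?_⟩
          · intro m hm hm'; omega
          · intro m hm hm'; omega
        exact hJnd.map_on (fun m hm m' hm' h => hinj (hbnd m hm) (hbnd m' hm') h)
    · simp only [SimpleGraph.Walk.length_cons, SimpleGraph.Walk.length_append,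
        SimpleGraph.Walk.length_reverse, SimpleGraph.Walk.length_copy, ascend_length]
      omega
  · -- j = i
    subst hjeq
    refine ⟨x, b, SimpleGraph.Walk.cons hxj
      ((((ascend P 0 j (by omega)).copy P.getVert_zero (by congr 1; omega)).reverse).append
        (SimpleGraph.Walk.cons hai
          ((ascend P (j+1) (ℓ-j-1) (by omega)).copy rfl
              (by rw [show (j+1)+(ℓ-j-1) = ℓ from by omega]; exact hfb)))), ?_, ?_⟩
    · rw [SimpleGraph.Walk.isPath_def]
      simp only [SimpleGraph.Walk.support_cons, SimpleGraph.Walk.support_append,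
        SimpleGraph.Walk.support_reverse, SimpleGraph.Walk.support_copy, ascend_support,
        List.tail_cons, ← List.map_reverse]
      rw [← List.map_append, List.nodup_cons]
      set J := (List.range' 0 (j+1)).reverse ++ (List.range' (j+1) (ℓ-j-1+1)) with hJdef
      have hbnd : ∀ m ∈ J, m ≤ ℓ := by
        intro m hm
        simp only [hJdef, List.mem_append, List.mem_reverse, List.mem_range'_1] at hm
        omega
      constructor
      · intro hmem
        obtain ⟨m, hm, hfm⟩ := List.mem_map.mp hmem
        exact hx (hfm ▸ hmemf m (hbnd m hm))
      · have hJnd : J.Nodup := by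
          simp only [hJdef, List.nodup_append, List.nodup_reverse, List.disjoint_left,
            List.mem_append, List.mem_reverse, List.mem_range'_1]
          refine ⟨List.nodup_range', List.nodup_range', ?_⟩
          intro m hm hm'; omega
        exact hJnd.map_on (fun m hm m' hm' h => hinj (hbnd m hm) (hbnd m' hm') h)
    · simp only [SimpleGraph.Walk.length_cons, SimpleGraph.Walk.length_append,
        SimpleGraph.Walk.length_reverse, SimpleGraph.Walk.length_copy, ascend_length]
      omega


lemma no_high_min_degree [Fintype V] [DecidableEq V] [DecidableRel G.Adj]
    (k : ℕ) (hk : 1 ≤ k) (hcard : k + 1 ≤ Fintype.card V)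
    (hdeg : ∀ v : V, k ≤ 2 * G.degree v)
    (hconn : G.Preconnected)
    (hpath : ∀ (u v : V) (p : G.Walk u v), p.IsPath → p.length ≠ k) : False := by
  have hVne : Nonempty V := by
    rw [← Fintype.card_pos_iff]; omega
  obtain ⟨v₀⟩ := hVne
  -- a path of maximal length
  set M : Set ℕ := {m : ℕ | ∃ (u v : V) (p : G.Walk u v), p.IsPath ∧ p.length = m} with hM
  have hM0 : 0 ∈ M := ⟨v₀, v₀, SimpleGraph.Walk.nil, SimpleGraph.Walk.IsPath.nil, rfl⟩
  have hbdd : BddAbove M := by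
    refine ⟨Fintype.card V, fun m hm => ?_⟩
    obtain ⟨u, v, p, hp, rfl⟩ := hm
    have := hp.length_lt
    omega
  obtain ⟨a, b, P, hP, hPlen⟩ := Nat.sSup_mem ⟨0, hM0⟩ hbdd
  set ℓ := sSup M with hℓdef
  have hmax : ∀ (u v : V) (q : G.Walk u v), q.IsPath → q.length ≤ ℓ :=
    fun u v q hq => le_csSup hbdd ⟨u, v, q, hq, rfl⟩
  have hℓk : ℓ < k := by
    by_contra h
    push_neg at h
    obtain ⟨u', v', q, hq, hqlen⟩ := exists_path_of_le (k := k) P hP (by rw [hPlen]; exact h)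
    exact hpath u' v' q hq hqlen
  have hℓ1 : 1 ≤ ℓ := by
    have hd := hdeg v₀
    have : 0 < G.degree v₀ := by omega
    rw [← SimpleGraph.card_neighborFinset_eq_degree, Finset.card_pos] at this
    obtain ⟨w, hw⟩ := this
    rw [SimpleGraph.mem_neighborFinset] at hw
    have hcons : (SimpleGraph.Walk.cons hw SimpleGraph.Walk.nil).IsPath := by
      rw [SimpleGraph.Walk.isPath_def]
      simp [G.ne_of_adj hw]
    have := hmax _ _ _ hcons
    simpa using this
  -- endpoints' neighbors lie on P
  have hnbra : ∀ w : V, G.Adj a w → w ∈ P.support := by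
    intro w h
    by_contra hw
    have hcons : (SimpleGraph.Walk.cons h.symm P).IsPath := hP.cons hw
    have := hmax _ _ _ hcons
    simp only [SimpleGraph.Walk.length_cons, hPlen] at this
    omega
  have hnbrb : ∀ w : V, G.Adj b w → w ∈ P.support := by
    intro w h
    by_contra hw
    have hcons : (SimpleGraph.Walk.cons h.symm P.reverse).IsPath := by
      refine hP.reverse.cons ?_
      rwa [SimpleGraph.Walk.support_reverse, List.mem_reverse]
    have := hmax _ _ _ hcons
    simp only [SimpleGraph.Walk.length_cons, SimpleGraph.Walk.length_reverse, hPlen] at this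
    omega
  -- pigeonhole on indices
  set A : Finset ℕ := (Finset.range ℓ).filter (fun m => G.Adj a (P.getVert (m+1))) with hA
  set B : Finset ℕ := (Finset.range ℓ).filter (fun m => G.Adj b (P.getVert m)) with hB
  have hdegA : G.degree a ≤ A.card := by
    have hsub : G.neighborFinset a ⊆ A.image (fun m => P.getVert (m+1)) := by
      intro w hw
      rw [SimpleGraph.mem_neighborFinset] at hw
      obtain ⟨m, hm, hmle⟩ := SimpleGraph.Walk.mem_support_iff_exists_getVert.mp (hnbra w hw)
      have hm0 : m ≠ 0 := by
        intro h0
        rw [h0, SimpleGraph.Walk.getVert_zero] at hm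
        exact G.ne_of_adj hw hm
      refine Finset.mem_image.mpr ⟨m - 1, ?_, ?_⟩
      · rw [hA, Finset.mem_filter, Finset.mem_range]
        constructor
        · rw [hPlen] at hmle; omega
        · rw [show m - 1 + 1 = m from by omega, hm]; exact hw
      · rw [show m - 1 + 1 = m from by omega]; exact hm
    calc G.degree a = (G.neighborFinset a).card := (G.card_neighborFinset_eq_degree a).symm
      _ ≤ (A.image (fun m => P.getVert (m+1))).card := Finset.card_le_card hsub
      _ ≤ A.card := Finset.card_image_le
  have hdegB : G.degree b ≤ B.card := by
    have hsub : G.neighborFinset b ⊆ B.image (fun m => P.getVert m) := by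
      intro w hw
      rw [SimpleGraph.mem_neighborFinset] at hw
      obtain ⟨m, hm, hmle⟩ := SimpleGraph.Walk.mem_support_iff_exists_getVert.mp (hnbrb w hw)
      have hmℓ : m ≠ P.length := by
        intro h0
        rw [h0, SimpleGraph.Walk.getVert_length] at hm
        exact G.ne_of_adj hw hm
      refine Finset.mem_image.mpr ⟨m, ?_, hm⟩
      rw [hB, Finset.mem_filter, Finset.mem_range]
      constructor
      · rw [hPlen] at hmle hmℓ; omega
      · rw [hm]; exact hw
    calc G.degree b = (G.neighborFinset b).card := (G.card_neighborFinset_eq_degree b).symm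
      _ ≤ (B.image (fun m => P.getVert m)).card := Finset.card_le_card hsub
      _ ≤ B.card := Finset.card_image_le
  have hABcard : 0 < (A ∩ B).card := by
    have h1 := Finset.card_union_add_card_inter A B
    have h2 : (A ∪ B).card ≤ ℓ := by
      refine le_trans (Finset.card_le_card ?_) (by simp : (Finset.range ℓ).card ≤ ℓ)
      intro m hm
      rcases Finset.mem_union.mp hm with h | h
      · exact Finset.mem_of_mem_filter m (by rwa [hA] at h)
      · exact Finset.mem_of_mem_filter m (by rwa [hB] at h)
    have hda := hdeg a
    have hdb := hdeg b
    omega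
  obtain ⟨i, hiAB⟩ := Finset.card_pos.mp hABcard
  rw [Finset.mem_inter, hA, hB, Finset.mem_filter, Finset.mem_filter, Finset.mem_range] at hiAB
  obtain ⟨⟨hiℓ, hai⟩, _, hbi⟩ := hiAB
  -- a vertex outside the path
  have hx : ∃ x : V, x ∉ P.support := by
    by_contra h
    push_neg at h
    have hsub : (Finset.univ : Finset V) ⊆ P.support.toFinset := by
      intro y _; rw [List.mem_toFinset]; exact h y
    have := Finset.card_le_card hsub
    rw [Finset.card_univ, List.toFinset_card_of_nodup hP.support_nodup,
      SimpleGraph.Walk.length_support, hPlen] at this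
    omega
  obtain ⟨x, hxP⟩ := hx
  -- boundary dart
  obtain ⟨W⟩ := hconn a x
  obtain ⟨d, _, hdfst, hdsnd⟩ := W.exists_boundary_dart {y | y ∈ P.support} (by simp [P.start_mem_support]) hxP
  obtain ⟨j, hj, hjle⟩ := SimpleGraph.Walk.mem_support_iff_exists_getVert.mp hdfst
  have hxj : G.Adj d.snd (P.getVert j) := by rw [hj]; exact d.adj.symm
  have hiℓ' : i < P.length := by rw [hPlen]; exact hiℓ
  rcases le_or_gt j i with hji | hij
  · obtain ⟨u', v', q, hq, hqlen⟩ := rotation P hP i j hiℓ' hji hai hbi d.snd hdsnd hxj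
    have := hmax _ _ _ hq
    rw [hqlen, hPlen] at this
    omega
  · -- apply rotation to the reverse path
    have hrev : P.reverse.IsPath := hP.reverse
    have hlrev : P.reverse.length = P.length := SimpleGraph.Walk.length_reverse _
    have e1 : P.reverse.getVert (P.length - 1 - i + 1) = P.getVert i := by
      rw [SimpleGraph.Walk.getVert_reverse]; congr 1; omega
    have e2 : P.reverse.getVert (P.length - 1 - i) = P.getVert (i + 1) := by
      rw [SimpleGraph.Walk.getVert_reverse]; congr 1; omega
    have e3 : P.reverse.getVert (P.length - j) = P.getVert j := by
      rw [SimpleGraph.Walk.getVert_reverse]; congr 1; rw [hPlen] at *; omega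
    obtain ⟨u', v', q, hq, hqlen⟩ := rotation P.reverse hrev (P.length - 1 - i) (P.length - j)
      (by omega) (by rw [hPlen] at *; omega)
      (by rw [e1]; exact hbi) (by rw [e2]; exact hai)
      d.snd (by rwa [SimpleGraph.Walk.support_reverse, List.mem_reverse]) (by rw [e3]; exact hxj)
    have := hmax _ _ _ hq
    rw [hqlen, hlrev, hPlen] at this
    omega


end D

theorem aux (k : ℕ) (hk : 1 ≤ k) :
    ∀ (N : ℕ) (V : Type) [Fintype V] [DecidableEq V] (G : SimpleGraph V) [DecidableRel G.Adj],
      Fintype.card V ≤ N →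
      (∀ (u v : V) (p : G.Walk u v), p.IsPath → p.length ≠ k) →
      2 * G.edgeFinset.card ≤ (k - 1) * Fintype.card V := by
  intro N
  induction N with
  | zero =>
      intro V _ _ G _ hcard _
      have h := easy_bound (G := G)
      have h2 : Fintype.card V * (Fintype.card V - 1) ≤ (k - 1) * Fintype.card V := by
        rw [mul_comm (k-1)]
        exact Nat.mul_le_mul le_rfl (by omega)
      omega
  | succ N ih =>
      intro V _ _ G _ hcard hpath
      by_cases hnk : Fintype.card V ≤ k
      · have h := easy_bound (G := G)
        have h2 : Fintype.card V * (Fintype.card V - 1) ≤ (k - 1) * Fintype.card V := by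
          rw [mul_comm (k-1)]
          exact Nat.mul_le_mul le_rfl (by omega)
        omega
      · push_neg at hnk
        by_cases hlow : ∃ v : V, 2 * G.degree v + 1 ≤ k
        · obtain ⟨v, hv⟩ := hlow
          have hcount := edge_count_delete (G := G) v
          have hcards := card_subtype_ne (V := V) v
          have hind := ih ↥({w : V | w ≠ v}) (G.induce {w : V | w ≠ v})
            (by rw [show Fintype.card ↥({w : V | w ≠ v})
                  = Fintype.card {w : V // w ∈ {w : V | w ≠ v}} from rfl, hcards]; omega)
            (no_path_induce {w : V | w ≠ v} hpath)
          have hcc : Fintype.card ↥({w : V | w ≠ v}) = Fintype.card V - 1 := hcards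
          rw [hcc] at hind
          have hmul : (k - 1) * (Fintype.card V - 1) + (k - 1) = (k - 1) * Fintype.card V := by
            rw [← Nat.mul_succ]
            congr 1
            omega
          omega
        · push_neg at hlow
          by_cases hconn : G.Preconnected
          · exact (no_high_min_degree k hk (by omega)
              (fun v => by have := hlow v; omega) hconn hpath).elim
          · rw [SimpleGraph.Preconnected] at hconn
            push_neg at hconn
            obtain ⟨u₀, w₀, hreach⟩ := hconn
            set s : Set V := {x | G.Reachable u₀ x} with hs
            set t : Set V := {x | ¬ G.Reachable u₀ x} with ht
            have hst : ∀ x, x ∈ t ↔ x ∉ s := fun x => Iff.rfl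
            have hcross : ∀ u w, u ∈ s → w ∉ s → ¬ G.Adj u w := by
              intro u w hu hw hadj
              exact hw (hu.trans hadj.reachable)
            have hcount := edge_count_split (G := G) s t hst hcross
            have hcards := card_subtype_split s t hst
            have hs1 : 1 ≤ Fintype.card ↥s :=
              Fintype.card_pos_iff.mpr ⟨⟨u₀, SimpleGraph.Reachable.refl u₀⟩⟩
            have ht1 : 1 ≤ Fintype.card ↥t := Fintype.card_pos_iff.mpr ⟨⟨w₀, hreach⟩⟩
            have hind1 := ih ↥s (G.induce s) (by omega) (no_path_induce s hpath)
            have hind2 := ih ↥t (G.induce t) (by omega) (no_path_induce t hpath)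
            have hmul : (k - 1) * Fintype.card ↥s + (k - 1) * Fintype.card ↥t
                = (k - 1) * Fintype.card V := by
              rw [← Nat.mul_add, hcards]
            omega

end EGP

theorem erdos_gallai_path (n k : ℕ) (hk : 1 ≤ k) (hkn : k ≤ n)
    (G : SimpleGraph (Fin n)) [DecidableRel G.Adj]
    (hpath : ∀ (u v : Fin n) (p : G.Walk u v), p.IsPath → p.length ≠ k) :
    2 * G.edgeFinset.card ≤ (k - 1) * n := by
  have := EGP.aux k hk (Fintype.card (Fin n)) (Fin n) G le_rfl hpath
  rwa [Fintype.card_fin] at this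
end

section
/- An (s, k-1)-block tree contains no Berge cycle of length at least k. -/
/-- A Berge cycle of length `t` in a (simple) hypergraph with edge set `E`. -/
def BergeCycle {V : Type*} (E : Finset (Finset V)) (t : ℕ) : Prop :=
  ∃ (v : Fin t → V) (e : Fin t → Finset V),
    Function.Injective v ∧ Function.Injective e ∧
    ∀ i : Fin t, e i ∈ E ∧ v i ∈ e i ∧ v ⟨(i.val + 1) % t, Nat.mod_lt _ i.pos⟩ ∈ e i

/-- The 2-shadow of a hypergraph: two vertices are adjacent iff they are
distinct and lie in a common hyperedge. -/
def shadowGraph {V : Type*} (E : Finset (Finset V)) : SimpleGraph V :=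
  SimpleGraph.fromRel (fun u v => ∃ s ∈ E, u ∈ s ∧ v ∈ s)

/-- A vertex set `B` induces a 2-connected subgraph of `G`. -/
def TwoConnectedOn {V : Type*} (G : SimpleGraph V) (B : Finset V) : Prop :=
  3 ≤ B.card ∧ (G.induce (B : Set V)).Connected ∧
    ∀ x ∈ B, (G.induce ((B : Set V) \ {x})).Connected

/-- A block of `G`: a maximal vertex set inducing a 2-connected subgraph. -/
def IsBlockOf {V : Type*} (G : SimpleGraph V) (B : Finset V) : Prop :=
  TwoConnectedOn G B ∧ ∀ B' : Finset V, TwoConnectedOn G B' → B ⊆ B' → B' = B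

/-- An `(s, k-1)`-block tree: the 2-shadow is connected, every edge of the
2-shadow lies in some block, and every block has `s` vertices which induce
exactly `k - 1` hyperedges. -/
def IsBlockTree {V : Type*} [DecidableEq V] (E : Finset (Finset V)) (s k : ℕ) : Prop :=
  (shadowGraph E).Connected ∧
  (∀ u v : V, (shadowGraph E).Adj u v →
    ∃ B : Finset V, IsBlockOf (shadowGraph E) B ∧ u ∈ B ∧ v ∈ B) ∧
  (∀ B : Finset V, IsBlockOf (shadowGraph E) B →
    B.card = s ∧ (E.filter (fun h => h ⊆ B)).card = k - 1)


section Aux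
variable {V : Type*} {G : SimpleGraph V}

/-- A nonempty set all of whose pairs are adjacent induces a connected graph. -/
lemma clique_induce_connected {S : Set V} (hS : S.Nonempty)
    (hadj : ∀ u ∈ S, ∀ v ∈ S, u ≠ v → G.Adj u v) : (G.induce S).Connected := by
  rw [SimpleGraph.connected_iff]
  refine ⟨fun a b => ?_, hS.to_subtype⟩
  by_cases h : (a : V) = b
  · rw [show a = b from Subtype.ext h]
  · exact SimpleGraph.Adj.reachable (hadj a a.2 b b.2 h)

/-- Reachability along a walk listed by a function. -/
lemma path_induce_reach {S : Set V} (w : ℕ → V) (m : ℕ) (hmem : ∀ i ≤ m, w i ∈ S)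
    (hadj : ∀ i < m, G.Adj (w i) (w (i+1))) :
    ∀ i, ∀ h : i ≤ m, (G.induce S).Reachable ⟨w 0, hmem 0 (Nat.zero_le _)⟩ ⟨w i, hmem i h⟩ := by
  intro i
  induction i with
  | zero => intro h; rfl
  | succ j ih =>
    intro h
    refine (ih (by omega)).trans (SimpleGraph.Adj.reachable ?_)
    exact hadj j (by omega)

lemma path_induce_connected {S : Set V} (w : ℕ → V) (m : ℕ)
    (hS : S = {x | ∃ i ≤ m, w i = x})
    (hadj : ∀ i < m, G.Adj (w i) (w (i+1))) : (G.induce S).Connected := by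
  subst hS
  have hmem : ∀ i ≤ m, w i ∈ {x | ∃ i ≤ m, w i = x} := fun i hi => ⟨i, hi, rfl⟩
  rw [SimpleGraph.connected_iff]
  refine ⟨fun a b => ?_, ⟨⟨w 0, hmem 0 (Nat.zero_le _)⟩⟩⟩
  obtain ⟨i, hi, hwa⟩ := a.2
  obtain ⟨j, hj, hwb⟩ := b.2
  have ha : a = ⟨w i, hmem i hi⟩ := Subtype.ext hwa.symm
  have hb : b = ⟨w j, hmem j hj⟩ := Subtype.ext hwb.symm
  rw [ha, hb]
  exact (path_induce_reach w m hmem hadj i hi).symm.trans (path_induce_reach w m hmem hadj j hj)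

variable [DecidableEq V]

/-- The union of two 2-connected sets sharing two vertices is 2-connected. -/
lemma twoConnectedOn_union {B1 B2 : Finset V} (h1 : TwoConnectedOn G B1)
    (h2 : TwoConnectedOn G B2) {x y : V} (hx1 : x ∈ B1) (hx2 : x ∈ B2)
    (hy1 : y ∈ B1) (hy2 : y ∈ B2) (hxy : x ≠ y) : TwoConnectedOn G (B1 ∪ B2) := by
  have hconn : ∀ (B : Finset V), TwoConnectedOn G B → ∀ z : V,
      (G.induce ((B : Set V) \ {z})).Connected ∨ ((B : Set V) \ {z}) = B := by
    intro B hB z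
    by_cases hz : z ∈ B
    · exact Or.inl (hB.2.2 z hz)
    · right; ext a; simp only [Set.mem_diff, Set.mem_singleton_iff, Finset.mem_coe]
      exact ⟨fun h => h.1, fun h => ⟨h, fun he => hz (he ▸ h)⟩⟩
  refine ⟨le_trans h1.1 (Finset.card_le_card Finset.subset_union_left), ?_, ?_⟩
  · rw [Finset.coe_union]
    exact SimpleGraph.induce_union_connected h1.2.1.preconnected h2.2.1.preconnected ⟨x, hx1, hx2⟩
  · intro z _
    have hset : ((B1 ∪ B2 : Finset V) : Set V) \ {z}
        = ((B1 : Set V) \ {z}) ∪ ((B2 : Set V) \ {z}) := by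
      rw [Finset.coe_union, Set.union_diff_distrib]
    rw [hset]
    have c1 : (G.induce ((B1 : Set V) \ {z})).Connected := by
      rcases hconn B1 h1 z with h | h
      · exact h
      · rw [h]; exact h1.2.1
    have c2 : (G.induce ((B2 : Set V) \ {z})).Connected := by
      rcases hconn B2 h2 z with h | h
      · exact h
      · rw [h]; exact h2.2.1
    refine SimpleGraph.induce_union_connected c1.preconnected c2.preconnected ?_
    rcases eq_or_ne x z with rfl | hxz
    · exact ⟨y, ⟨hy1, hxy.symm⟩, ⟨hy2, hxy.symm⟩⟩
    · exact ⟨x, ⟨hx1, hxz⟩, ⟨hx2, hxz⟩⟩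

/-- A 2-connected set sharing two vertices with a block is contained in it. -/
lemma subset_block_of_twoConnected {B D : Finset V} (hB : IsBlockOf G B)
    (hD : TwoConnectedOn G D) {x y : V} (hx1 : x ∈ B) (hx2 : x ∈ D)
    (hy1 : y ∈ B) (hy2 : y ∈ D) (hxy : x ≠ y) : D ⊆ B := by
  have h := hB.2 (B ∪ D)
    (twoConnectedOn_union hB.1 hD hx1 hx2 hy1 hy2 hxy) Finset.subset_union_left
  intro a ha
  rw [← h]
  exact Finset.mem_union_right _ ha


-- A clique of size ≥ 3 is 2-connected.
omit [DecidableEq V] in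
lemma twoConnectedOn_clique {S : Finset V} (h3 : 3 ≤ S.card)
    (hadj : ∀ u ∈ S, ∀ v ∈ S, u ≠ v → G.Adj u v) : TwoConnectedOn G S := by
  refine ⟨h3, clique_induce_connected ?_ (by simpa using hadj), ?_⟩
  · exact Finset.card_pos.mp (by omega)
  · intro z hz
    refine clique_induce_connected ?_ ?_
    · obtain ⟨a, ha, hne⟩ := Finset.exists_mem_ne (s := S) (by omega) z
      exact ⟨a, ha, hne⟩
    · rintro u ⟨hu, _⟩ v ⟨hv, _⟩ hne
      exact hadj u hu v hv hne

end Aux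

theorem block_tree_no_long_berge_cycle (n r k s : ℕ) (hk : 3 ≤ k) (hkr : k ≤ r)
    (hs : s = r ∨ s = r + 1)
    (E : Finset (Finset (Fin n))) (hunif : ∀ e ∈ E, e.card = r)
    (htree : IsBlockTree E s k) :
    ∀ t, k ≤ t → ¬ BergeCycle E t := by
  intro t ht hcyc
  obtain ⟨v, e, hv, he, hc⟩ := hcyc
  have ht3 : 3 ≤ t := le_trans hk ht
  have hr3 : 3 ≤ r := le_trans hk hkr
  set G := shadowGraph E with hG
  -- members of a common hyperedge are adjacent in the shadow graph
  have hedge_adj : ∀ f ∈ E, ∀ u ∈ f, ∀ w ∈ f, u ≠ w → G.Adj u w := by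
    intro f hf u hu w hw huw
    rw [hG, shadowGraph, SimpleGraph.fromRel_adj]
    exact ⟨huw, Or.inl ⟨f, hf, hu, hw⟩⟩
  have hedge_two : ∀ i : Fin t, TwoConnectedOn G (e i) := fun i =>
    twoConnectedOn_clique (by rw [hunif _ (hc i).1]; omega)
      (fun u hu w hw huw => hedge_adj _ (hc i).1 u hu w hw huw)
  -- the cycle as an infinite walk
  set w : ℕ → Fin n := fun a => v ⟨a % t, Nat.mod_lt _ (by omega)⟩ with hw
  have hmod1 : (1 : ℕ) % t = 1 := Nat.mod_eq_of_lt (by omega)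
  have hvadj : ∀ a : ℕ, G.Adj (w a) (w (a + 1)) := by
    intro a
    set i : Fin t := ⟨a % t, Nat.mod_lt _ (by omega)⟩ with hi
    have h1 : w (a + 1) = v ⟨(i.val + 1) % t, Nat.mod_lt _ i.pos⟩ := by
      simp only [hw]
      congr 1
      apply Fin.ext
      simp only [hi, Nat.add_mod a 1 t, hmod1]
    have hne : i ≠ ⟨(i.val + 1) % t, Nat.mod_lt _ i.pos⟩ := by
      intro hcon
      have := congrArg Fin.val hcon
      simp only [hi] at this
      rcases Nat.lt_or_ge (a % t + 1) t with h | h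
      · rw [Nat.mod_eq_of_lt h] at this; omega
      · have hat : a % t < t := Nat.mod_lt _ (by omega)
        have heq : a % t + 1 = t := by omega
        rw [heq, Nat.mod_self] at this; omega
    have h2 : w a = v i := rfl
    rw [h1, h2]
    exact hedge_adj _ (hc i).1 _ (hc i).2.1 _ (hc i).2.2 (fun hcon => hne (hv hcon))
  -- the vertex set of the cycle is 2-connected
  set C : Finset (Fin n) := Finset.image v Finset.univ with hC
  have hCcard : C.card = t := by
    rw [hC, Finset.card_image_of_injective _ hv, Finset.card_univ, Fintype.card_fin]
  have hCmem : ∀ i : Fin t, v i ∈ C := fun i => Finset.mem_image_of_mem v (Finset.mem_univ i)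
  have hCconn : (G.induce (C : Set (Fin n))).Connected := by
    apply path_induce_connected w (t - 1)
    · ext x
      simp only [hC, Finset.coe_image, Finset.coe_univ, Set.image_univ, Set.mem_range,
        Set.mem_setOf_eq]
      constructor
      · rintro ⟨a, rfl⟩
        refine ⟨a.val, by omega, ?_⟩
        simp only [hw]
        congr 1
        exact Fin.ext (Nat.mod_eq_of_lt a.isLt)
      · rintro ⟨i, _, rfl⟩
        exact ⟨_, rfl⟩
    · intro i _
      exact hvadj i
  have hCtwo : TwoConnectedOn G C := by
    refine ⟨by omega, hCconn, ?_⟩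
    intro x hx
    obtain ⟨j, _, rfl⟩ := Finset.mem_image.mp hx
    apply path_induce_connected (fun a => w (j.val + 1 + a)) (t - 2)
    · ext x
      simp only [Set.mem_diff, Set.mem_singleton_iff, Finset.mem_coe, Set.mem_setOf_eq]
      constructor
      · rintro ⟨hxC, hxne⟩
        obtain ⟨a, _, rfl⟩ := Finset.mem_image.mp hxC
        have hane : a ≠ j := fun hcon => hxne (by rw [hcon])
        have haval : a.val ≠ j.val := fun hcon => hane (Fin.ext hcon)
        rcases Nat.lt_or_ge j.val a.val with hja | haj
        · refine ⟨a.val - j.val - 1, by omega, ?_⟩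
          simp only [hw]
          congr 1
          apply Fin.ext
          simp only
          rw [show j.val + 1 + (a.val - j.val - 1) = a.val by omega,
            Nat.mod_eq_of_lt a.isLt]
        · have haj' : a.val < j.val := by omega
          refine ⟨a.val + t - j.val - 1, by omega, ?_⟩
          simp only [hw]
          congr 1
          apply Fin.ext
          simp only
          rw [show j.val + 1 + (a.val + t - j.val - 1) = a.val + t by omega,
            Nat.add_mod_right, Nat.mod_eq_of_lt a.isLt]
      · rintro ⟨i, hi, rfl⟩
        constructor
        · exact hCmem _
        · intro hcon
          have hval := congrArg Fin.val (hv hcon)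
          simp only at hval
          set a := j.val + 1 + i with ha
          rcases Nat.lt_or_ge a t with h | h
          · rw [Nat.mod_eq_of_lt h] at hval; omega
          · have h2t : a < 2 * t := by omega
            rw [Nat.mod_eq_sub_mod h, Nat.mod_eq_of_lt (by omega)] at hval
            omega
    · intro i _
      exact hvadj (j.val + 1 + i)
  -- a block containing v 0 and v 1
  set i0 : Fin t := ⟨0, by omega⟩ with hi0
  set i1 : Fin t := ⟨1, by omega⟩ with hi1
  have hadj01 : G.Adj (v i0) (v i1) := by
    have h := hvadj 0
    have e0 : w 0 = v i0 := congrArg v (Fin.ext (Nat.zero_mod t))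
    have e1 : w 1 = v i1 := congrArg v (Fin.ext hmod1)
    rwa [e0, e1] at h
  obtain ⟨B, hB, hvB0, hvB1⟩ := htree.2.1 _ _ hadj01
  have hne01 : v i0 ≠ v i1 := fun hcon => by
    have : (0 : ℕ) = 1 := congrArg Fin.val (hv hcon)
    omega
  have hCB : C ⊆ B :=
    subset_block_of_twoConnected hB hCtwo hvB0 (hCmem i0) hvB1 (hCmem i1) hne01
  -- every hyperedge of the cycle lies in B
  have heB : ∀ i : Fin t, e i ⊆ B := by
    intro i
    have hnei : v i ≠ v ⟨(i.val + 1) % t, Nat.mod_lt _ i.pos⟩ := by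
      intro hcon
      have hval := congrArg Fin.val (hv hcon)
      simp only at hval
      rcases Nat.lt_or_ge (i.val + 1) t with h | h
      · rw [Nat.mod_eq_of_lt h] at hval; omega
      · have : i.val + 1 = t := by omega
        rw [this, Nat.mod_self] at hval; omega
    exact subset_block_of_twoConnected hB (hedge_two i)
      (hCB (hCmem i)) (hc i).2.1 (hCB (hCmem _)) (hc i).2.2 hnei
  -- counting
  have hsub : Finset.image e Finset.univ ⊆ E.filter (fun h => h ⊆ B) := by
    intro f hf
    obtain ⟨i, _, rfl⟩ := Finset.mem_image.mp hf
    exact Finset.mem_filter.mpr ⟨(hc i).1, heB i⟩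
  have hcard : t ≤ (E.filter (fun h => h ⊆ B)).card := by
    calc t = (Finset.image e Finset.univ).card := by
          rw [Finset.card_image_of_injective _ he, Finset.card_univ, Fintype.card_fin]
      _ ≤ _ := Finset.card_le_card hsub
  have := (htree.2.2 B hB).2
  omega
end
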